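/- Metric entropy bound for the non-sparse ReLU network class (Lemma A.2): for every dimension p and every B ≥ 1, there exists a constant c₀ depending only on p and B such that for all L, K ≥ 2 and all ε ∈ (0,1), there exists a finite set G of functions from [0,1]^p to ℝ with cardinality at most exp( c₀ · (L·K)² · log(L·K/ε) ) such that every f ∈ F_nn(L, K, B) satisfies sup_{x ∈ [0,1]^p} |f(x) − g(x)| ≤ ε for some g ∈ G; equivalently, the ε-covering number of F_nn(L, K, B) in the sup-norm on [0,1]^p satisfies log N(ε, F_nn(L, K, B), ‖·‖_∞) ≤ c₀ (L·K)² log(L·K/ε). -/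

import Mathlib

open MeasureTheory ProbabilityTheory

/-- The unit cube `[0,1]^p`. -/
def unitCube (p : ℕ) : Set (Fin p → ℝ) := {x | ∀ i, x i ∈ Set.Icc (0 : ℝ) 1}

/-- Forward pass of a ReLU network: layer `l` maps `v ∈ ℝ^{dims l}` to
`i ↦ ∑ j W^{(l)}_{i j} · max(v j − b^{(l)} j, 0)`. -/
noncomputable def reluForward (dims : ℕ → ℕ)
    (W : (l : ℕ) → Matrix (Fin (dims (l + 1))) (Fin (dims l)) ℝ)
    (b : (l : ℕ) → Fin (dims l) → ℝ) : (l : ℕ) → (Fin (dims 0) → ℝ) → Fin (dims l) → ℝ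
  | 0 => fun x => x
  | l + 1 => fun x i => ∑ j, W l i j * max (reluForward dims W b l x j - b l j) 0

/-- Membership in the fully-connected feed-forward ReLU network class
`F_nn(L, K, B)` with input dimension `p`, depth `L`, width `K` and all
parameters bounded by `B` in absolute value. -/
def FnnMem (p L K : ℕ) (B : ℝ) (F : (Fin p → ℝ) → ℝ) : Prop :=
  ∃ (dims : ℕ → ℕ) (hd0 : dims 0 = p),
    dims L = 1 ∧ (∀ l, 1 ≤ l → l < L → dims l = K) ∧
    ∃ (W : (l : ℕ) → Matrix (Fin (dims (l + 1))) (Fin (dims l)) ℝ)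
      (b : (l : ℕ) → Fin (dims l) → ℝ),
      (∀ l, l < L → ∀ i j, |W l i j| ≤ B) ∧
      (∀ l, l < L → ∀ j, |b l j| ≤ B) ∧
      ∀ x : Fin p → ℝ, F x = ∑ i, reluForward dims W b L (fun j => x (Fin.cast hd0 j)) i

/-- Partial derivative in coordinate `i`. -/
noncomputable def cpderiv {k : ℕ} (i : Fin k) (g : (Fin k → ℝ) → ℝ) : (Fin k → ℝ) → ℝ :=
  fun x => fderiv ℝ g x (Pi.single i 1)

/-- Iterated partial derivative along a list of coordinates (a multi-index). -/
noncomputable def mderiv {k : ℕ} (Ls : List (Fin k)) (g : (Fin k → ℝ) → ℝ) :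
    (Fin k → ℝ) → ℝ :=
  Ls.foldr cpderiv g

/-- The Hölder ball `H_k(α; C)` on `[0,1]^k` (the sup metric `dist` is used on
`Fin k → ℝ`). -/
def HolderBall (k : ℕ) (α C : ℝ) (g : (Fin k → ℝ) → ℝ) : Prop :=
  (α < 1 →
    ∀ x ∈ unitCube k, ∀ y ∈ unitCube k, x ≠ y → |g x - g y| ≤ C * dist x y ^ α) ∧
  (1 ≤ α →
    (∀ Ls : List (Fin k), Ls.length < ⌊α⌋₊ →
        ∀ x ∈ unitCube k, DifferentiableAt ℝ (mderiv Ls g) x) ∧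
    (∀ Ls : List (Fin k), Ls.length < ⌊α⌋₊ →
        ∀ x ∈ unitCube k, |mderiv Ls g x| ≤ C) ∧
    (∀ Ls : List (Fin k), Ls.length = ⌊α⌋₊ →
        ∀ x ∈ unitCube k, ∀ y ∈ unitCube k, x ≠ y →
          |mderiv Ls g x - mderiv Ls g y| ≤ C * dist x y ^ (α - (⌊α⌋₊ : ℝ))))

/-- The generalized Hölder class `H_k^†(α; C)` of functions on `[0,1]^p` of the form
`g(w) = h(Γ w)` with `h ∈ H_k(α; C)` and `Γ` an (unknown) `k × p` matrix mapping
`[0,1]^p` into `[0,1]^k`. -/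
def GenHolderBall (p k : ℕ) (α C : ℝ) (g : (Fin p → ℝ) → ℝ) : Prop :=
  ∃ (h : (Fin k → ℝ) → ℝ) (Γ : Matrix (Fin k) (Fin p) ℝ),
    HolderBall k α C h ∧ (∀ x ∈ unitCube p, Γ.mulVec x ∈ unitCube k) ∧
    ∀ x ∈ unitCube p, g x = h (Γ.mulVec x)

/-- `ξ` is mean-zero sub-Gaussian with parameter `σ` under `μ`. -/
def SubGaussian {Ω : Type*} [MeasurableSpace Ω] (μ : Measure Ω) (ξ : Ω → ℝ) (σ : ℝ) :
    Prop :=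
  Integrable ξ μ ∧ (∫ ω, ξ ω ∂μ) = 0 ∧
    ∀ t : ℝ, Integrable (fun ω => Real.exp (t * ξ ω)) μ ∧
      (∫ ω, Real.exp (t * ξ ω) ∂μ) ≤ Real.exp (t ^ 2 * σ ^ 2 / 2)

/- ### Auxiliary development -/

/-- Untyped (ℕ-indexed) forward pass of a ReLU network. -/
noncomputable def nnEv (dims : ℕ → ℕ) (W : ℕ → ℕ → ℕ → ℝ) (b : ℕ → ℕ → ℝ) :
    ℕ → (ℕ → ℝ) → ℕ → ℝ
  | 0 => fun x => x
  | l + 1 => fun x i =>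
      ∑ j ∈ Finset.range (dims l), W l i j * max (nnEv dims W b l x j - b l j) 0

def extv {n : ℕ} (x : Fin n → ℝ) : ℕ → ℝ := fun j => if h : j < n then x ⟨j, h⟩ else 0

def extW (dims : ℕ → ℕ) (W : (l : ℕ) → Matrix (Fin (dims (l+1))) (Fin (dims l)) ℝ) :
    ℕ → ℕ → ℕ → ℝ :=
  fun l i j => if h : i < dims (l+1) ∧ j < dims l then W l ⟨i, h.1⟩ ⟨j, h.2⟩ else 0

def extb (dims : ℕ → ℕ) (b : (l : ℕ) → Fin (dims l) → ℝ) : ℕ → ℕ → ℝ :=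
  fun l j => if h : j < dims l then b l ⟨j, h⟩ else 0

lemma nnEv_bridge (dims : ℕ → ℕ)
    (W : (l : ℕ) → Matrix (Fin (dims (l+1))) (Fin (dims l)) ℝ)
    (b : (l : ℕ) → Fin (dims l) → ℝ) :
    ∀ (l : ℕ) (x : Fin (dims 0) → ℝ) (i : Fin (dims l)),
      reluForward dims W b l x i = nnEv dims (extW dims W) (extb dims b) l (extv x) i.val := by
  intro l
  induction l with
  | zero => intro x i; simp [reluForward, nnEv, extv]
  | succ l ih =>
      intro x i
      show (∑ j, W l i j * max (reluForward dims W b l x j - b l j) 0) = _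
      rw [show nnEv dims (extW dims W) (extb dims b) (l+1) (extv x) i.val =
        ∑ j ∈ Finset.range (dims l), extW dims W l i.val j *
          max (nnEv dims (extW dims W) (extb dims b) l (extv x) j - extb dims b l j) 0 from rfl]
      rw [← Fin.sum_univ_eq_sum_range]
      refine Finset.sum_congr rfl fun j _ => ?_
      rw [← ih x j]
      have hi : i.val < dims (l+1) := i.isLt
      have hj : j.val < dims l := j.isLt
      simp [extW, extb, hi, hj]

lemma nnEv_congr (dims dims' : ℕ → ℕ) (W W' : ℕ → ℕ → ℕ → ℝ) (b b' : ℕ → ℕ → ℝ)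
    (x : ℕ → ℝ) :
    ∀ l, (∀ m < l, dims m = dims' m) →
      (∀ m < l, ∀ i j, j < dims m → W m i j = W' m i j) →
      (∀ m < l, ∀ j, j < dims m → b m j = b' m j) →
      ∀ i, nnEv dims W b l x i = nnEv dims' W' b' l x i := by
  intro l
  induction l with
  | zero => intro _ _ _ i; rfl
  | succ l ih =>
      intro hd hW hb i
      show (∑ j ∈ Finset.range (dims l), W l i j * max (nnEv dims W b l x j - b l j) 0) = _
      rw [show nnEv dims' W' b' (l+1) x i = ∑ j ∈ Finset.range (dims' l),
        W' l i j * max (nnEv dims' W' b' l x j - b' l j) 0 from rfl]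
      rw [← hd l (Nat.lt_succ_self l)]
      refine Finset.sum_congr rfl fun j hj => ?_
      rw [Finset.mem_range] at hj
      rw [hW l (Nat.lt_succ_self l) i j hj, hb l (Nat.lt_succ_self l) j hj,
        ih (fun m hm => hd m (hm.trans (Nat.lt_succ_self l)))
          (fun m hm => hW m (hm.trans (Nat.lt_succ_self l)))
          (fun m hm => hb m (hm.trans (Nat.lt_succ_self l)))]

lemma nnEv_bound (dims : ℕ → ℕ) (W : ℕ → ℕ → ℕ → ℝ) (b : ℕ → ℕ → ℝ) (x : ℕ → ℝ)
    (D : ℕ) (B : ℝ) (hD : ∀ l, dims l ≤ D) (hD1 : 1 ≤ D)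
    (hx : ∀ j, |x j| ≤ 1) (hB : 1 ≤ B) :
    ∀ l, (∀ m < l, ∀ i j, |W m i j| ≤ B ∧ |b m j| ≤ B) →
      ∀ i, |nnEv dims W b l x i| ≤ (2 * D * B ^ 2) ^ l := by
  intro l
  set C : ℝ := 2 * D * B ^ 2 with hC
  have hD1' : (1 : ℝ) ≤ D := by exact_mod_cast hD1
  have hC1 : 1 ≤ C := by nlinarith
  induction l with
  | zero => intro _ i; simpa [nnEv] using hx i
  | succ l ih =>
      intro hyp i
      have hCl : (1:ℝ) ≤ C ^ l := one_le_pow₀ hC1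
      have ihl := ih (fun m hm => hyp m (hm.trans (Nat.lt_succ_self l)))
      have hterm : ∀ j, |W l i j * max (nnEv dims W b l x j - b l j) 0| ≤ B * (C ^ l + B) := by
        intro j
        obtain ⟨h1, h2⟩ := hyp l (Nat.lt_succ_self l) i j
        have h3 := ihl j
        have h4 : |max (nnEv dims W b l x j - b l j) 0| ≤ C ^ l + B := by
          rw [abs_of_nonneg (le_max_right _ _)]
          have e3 := abs_le.mp h3
          have e2 := abs_le.mp h2
          exact max_le (by linarith [e3.2, e2.1]) (by linarith [e3.1, e2.2])
        rw [abs_mul]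
        exact mul_le_mul h1 h4 (abs_nonneg _) (by linarith)
      calc |nnEv dims W b (l+1) x i|
          ≤ ∑ j ∈ Finset.range (dims l), |W l i j * max (nnEv dims W b l x j - b l j) 0| :=
            Finset.abs_sum_le_sum_abs _ _
        _ ≤ ∑ _j ∈ Finset.range (dims l), B * (C ^ l + B) :=
            Finset.sum_le_sum fun j _ => hterm j
        _ = (dims l : ℝ) * (B * (C ^ l + B)) := by
            rw [Finset.sum_const, Finset.card_range, nsmul_eq_mul]
        _ ≤ (D : ℝ) * (B * (C ^ l + B)) := by
            have hd : (dims l : ℝ) ≤ D := by exact_mod_cast hD l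
            have : 0 ≤ B * (C ^ l + B) := by nlinarith
            exact mul_le_mul_of_nonneg_right hd this
        _ ≤ C ^ (l+1) := by
            rw [pow_succ, hC]
            nlinarith [mul_le_mul_of_nonneg_left hCl (by nlinarith : (0:ℝ) ≤ (D:ℝ) * B * B),
              mul_le_mul_of_nonneg_left hCl (by nlinarith : (0:ℝ) ≤ (D:ℝ) * B)]

lemma nnEv_diff (dims : ℕ → ℕ) (W W' : ℕ → ℕ → ℕ → ℝ) (b b' : ℕ → ℕ → ℝ) (x : ℕ → ℝ)
    (D : ℕ) (B δ : ℝ) (hD : ∀ l, dims l ≤ D) (hD1 : 1 ≤ D)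
    (hx : ∀ j, |x j| ≤ 1) (hB : 1 ≤ B) (hδ : 0 ≤ δ) :
    ∀ l, (∀ m < l, ∀ i j, |W m i j| ≤ B ∧ |b m j| ≤ B ∧ |W' m i j| ≤ B ∧ |b' m j| ≤ B ∧
          |W m i j - W' m i j| ≤ δ ∧ |b m j - b' m j| ≤ δ) →
      ∀ i, |nnEv dims W b l x i - nnEv dims W' b' l x i| ≤ δ * l * (3 * (2 * D * B ^ 2)) ^ l := by
  intro l
  set C : ℝ := 2 * D * B ^ 2 with hC
  have hD1' : (1 : ℝ) ≤ D := by exact_mod_cast hD1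
  have hC1 : 1 ≤ C := by nlinarith
  have hB2 : (1:ℝ) ≤ 2 * B ^ 2 := by nlinarith
  have hDC : (D : ℝ) ≤ C := by
    have := mul_le_mul_of_nonneg_left hB2 (by linarith : (0:ℝ) ≤ (D:ℝ))
    rw [hC]; linarith [this]
  have hDBC : (D : ℝ) * B ≤ C := by
    have h1 : B ≤ 2 * B ^ 2 := by nlinarith
    have := mul_le_mul_of_nonneg_left h1 (by linarith : (0:ℝ) ≤ (D:ℝ))
    rw [hC]; linarith [this]
  induction l with
  | zero => intro _ i; simp [nnEv]
  | succ l ih =>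
      intro hyp i
      have hyp' : ∀ m, m < l → ∀ i j, |W m i j| ≤ B ∧ |b m j| ≤ B ∧ |W' m i j| ≤ B ∧
          |b' m j| ≤ B ∧ |W m i j - W' m i j| ≤ δ ∧ |b m j - b' m j| ≤ δ :=
        fun m hm => hyp m (hm.trans (Nat.lt_succ_self l))
      have ihl := ih hyp'
      have hbnd := nnEv_bound dims W b x D B hD hD1 hx hB l
        (fun m hm => fun i j => ⟨(hyp' m hm i j).1, (hyp' m hm i j).2.1⟩)
      set s : ℝ := (3 * C) ^ l with hs
      have hs1 : (1:ℝ) ≤ s := one_le_pow₀ (by linarith)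
      have hCls : C ^ l ≤ s := pow_le_pow_left₀ (by linarith) (by linarith) l
      have hCl1 : (1:ℝ) ≤ C ^ l := one_le_pow₀ hC1
      set Δ : ℝ := δ * l * s with hΔ
      have hΔ0 : 0 ≤ Δ := by positivity
      have hterm : ∀ j, |W l i j * max (nnEv dims W b l x j - b l j) 0 -
          W' l i j * max (nnEv dims W' b' l x j - b' l j) 0| ≤
          δ * (C ^ l + B) + B * (Δ + δ) := by
        intro j
        obtain ⟨h1, h2, h3, h4, h5, h6⟩ := hyp l (Nat.lt_succ_self l) i j
        have hv := hbnd j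
        have hΔj := ihl j
        set a := max (nnEv dims W b l x j - b l j) 0 with ha
        set a' := max (nnEv dims W' b' l x j - b' l j) 0 with ha'
        have haabs : |a| ≤ C ^ l + B := by
          rw [ha, abs_of_nonneg (le_max_right _ _)]
          have e3 := abs_le.mp hv
          have e2 := abs_le.mp h2
          exact max_le (by linarith [e3.2, e2.1]) (by linarith [e3.1, e2.2])
        have haa' : |a - a'| ≤ Δ + δ := by
          calc |a - a'| ≤ |(nnEv dims W b l x j - b l j) - (nnEv dims W' b' l x j - b' l j)| :=
                abs_max_sub_max_le_abs _ _ 0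
            _ ≤ |nnEv dims W b l x j - nnEv dims W' b' l x j| + |b l j - b' l j| := by
                have : (nnEv dims W b l x j - b l j) - (nnEv dims W' b' l x j - b' l j) =
                  (nnEv dims W b l x j - nnEv dims W' b' l x j) - (b l j - b' l j) := by ring
                rw [this]
                exact abs_sub _ _
            _ ≤ Δ + δ := add_le_add hΔj h6
        calc |W l i j * a - W' l i j * a'|
            = |(W l i j - W' l i j) * a + W' l i j * (a - a')| := by ring_nf
          _ ≤ |(W l i j - W' l i j) * a| + |W' l i j * (a - a')| := abs_add_le _ _
          _ = |W l i j - W' l i j| * |a| + |W' l i j| * |a - a'| := by rw [abs_mul, abs_mul]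
          _ ≤ δ * (C ^ l + B) + B * (Δ + δ) := by
              have c1 : |W l i j - W' l i j| * |a| ≤ δ * (C ^ l + B) :=
                mul_le_mul h5 haabs (abs_nonneg _) hδ
              have c2 : |W' l i j| * |a - a'| ≤ B * (Δ + δ) :=
                mul_le_mul h3 haa' (abs_nonneg _) (by linarith)
              linarith
      have hsum : |nnEv dims W b (l+1) x i - nnEv dims W' b' (l+1) x i| ≤
          (D : ℝ) * (δ * (C ^ l + B) + B * (Δ + δ)) := by
        have : nnEv dims W b (l+1) x i - nnEv dims W' b' (l+1) x i =
            ∑ j ∈ Finset.range (dims l), (W l i j * max (nnEv dims W b l x j - b l j) 0 -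
              W' l i j * max (nnEv dims W' b' l x j - b' l j) 0) := by
          rw [show nnEv dims W b (l+1) x i = ∑ j ∈ Finset.range (dims l),
            W l i j * max (nnEv dims W b l x j - b l j) 0 from rfl,
            show nnEv dims W' b' (l+1) x i = ∑ j ∈ Finset.range (dims l),
            W' l i j * max (nnEv dims W' b' l x j - b' l j) 0 from rfl,
            ← Finset.sum_sub_distrib]
        rw [this]
        calc |∑ j ∈ Finset.range (dims l), _| ≤ ∑ j ∈ Finset.range (dims l),
              |W l i j * max (nnEv dims W b l x j - b l j) 0 -
              W' l i j * max (nnEv dims W' b' l x j - b' l j) 0| :=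
              Finset.abs_sum_le_sum_abs _ _
          _ ≤ ∑ _j ∈ Finset.range (dims l), (δ * (C ^ l + B) + B * (Δ + δ)) :=
              Finset.sum_le_sum fun j _ => hterm j
          _ = (dims l : ℝ) * (δ * (C ^ l + B) + B * (Δ + δ)) := by
              rw [Finset.sum_const, Finset.card_range, nsmul_eq_mul]
          _ ≤ (D : ℝ) * (δ * (C ^ l + B) + B * (Δ + δ)) := by
              have hd : (dims l : ℝ) ≤ D := by exact_mod_cast hD l
              have h0 : (0:ℝ) ≤ δ * (C ^ l + B) + B * (Δ + δ) := by nlinarith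
              exact mul_le_mul_of_nonneg_right hd h0
      refine hsum.trans ?_
      have key : (D : ℝ) * (δ * (C ^ l + B) + B * (Δ + δ)) ≤ δ * (l+1) * (3*C*s) := by
        have e1 : δ * ((D:ℝ) * C ^ l) ≤ δ * (C * s) :=
          mul_le_mul_of_nonneg_left (by nlinarith) hδ
        have e2 : δ * ((D:ℝ) * B) ≤ δ * (C * s) := by
          have : (D:ℝ) * B ≤ C * s := by nlinarith
          exact mul_le_mul_of_nonneg_left this hδ
        have e3 : (δ * l * s) * ((D:ℝ) * B) ≤ (δ * l * s) * C := by
          have h0 : (0:ℝ) ≤ δ * l * s := by positivity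
          exact mul_le_mul_of_nonneg_left hDBC h0
        have e4 : (δ * l) * C ≤ (δ * l) * (C * s) := by
          have h0 : (0:ℝ) ≤ δ * l := by positivity
          nlinarith [mul_le_mul_of_nonneg_left hs1 (mul_nonneg h0 (by linarith : (0:ℝ) ≤ C))]
        rw [hΔ]
        nlinarith [e1, e2, e3, e4]
      calc (D : ℝ) * (δ * (C ^ l + B) + B * (Δ + δ)) ≤ δ * (l+1) * (3*C*s) := key
        _ = δ * (↑(l+1)) * (3*C) ^ (l+1) := by
            rw [pow_succ]; push_cast; ring

noncomputable def gridIdx (δ : ℝ) (N : ℕ) (w : ℝ) : Fin (2*N+1) :=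
  ⟨(max (-(N:ℤ)) (min (round (w/δ)) (N:ℤ)) + N).toNat, by
    have h1 : max (-(N:ℤ)) (min (round (w/δ)) (N:ℤ)) ≤ N :=
      max_le (by omega) (min_le_right _ _)
    have h2 : -(N:ℤ) ≤ max (-(N:ℤ)) (min (round (w/δ)) (N:ℤ)) := le_max_left _ _
    omega⟩

noncomputable def gridVal (δ : ℝ) (N : ℕ) (i : Fin (2*N+1)) : ℝ :=
  (((i : ℕ) : ℝ) - N) * δ

lemma grid_approx (δ : ℝ) (N : ℕ) (B w : ℝ) (hδ : 0 < δ) (hδ1 : δ ≤ 1) (hB : 1 ≤ B)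
    (hN : B / δ + 1 ≤ N) (hw : |w| ≤ B) :
    |gridVal δ N (gridIdx δ N w) - w| ≤ δ ∧ |gridVal δ N (gridIdx δ N w)| ≤ 2 * B := by
  set r : ℤ := round (w / δ) with hr
  have hround : |w / δ - r| ≤ 1 / 2 := abs_sub_round (w / δ)
  have hwd : |w / δ| ≤ B / δ := by
    rw [abs_div, abs_of_pos hδ]
    gcongr
  have hrabs : |(r : ℝ)| ≤ B / δ + 1 / 2 := by
    have h2 : |(r:ℝ) - w / δ| ≤ 1/2 := by rwa [abs_sub_comm]
    linarith [abs_le.mp hwd, (abs_le.mp h2), abs_sub_abs_le_abs_sub (r : ℝ) (w / δ)]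
  have hrN : |(r : ℝ)| ≤ N := by linarith
  have hrle : r ≤ (N : ℤ) := by exact_mod_cast (abs_le.mp hrN).2
  have hrge : -(N : ℤ) ≤ r := by
    have := (abs_le.mp hrN).1
    exact_mod_cast this
  have hclamp : max (-(N:ℤ)) (min r (N:ℤ)) = r := by
    rw [min_eq_left hrle, max_eq_right hrge]
  have hval : gridVal δ N (gridIdx δ N w) = (r : ℝ) * δ := by
    rw [gridVal, gridIdx]
    simp only [← hr, hclamp]
    have hnn : (0 : ℤ) ≤ r + N := by omega
    rw [show (((r + (N:ℤ)).toNat : ℕ) : ℝ) = ((r : ℝ) + N) by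
      rw [← Int.cast_natCast, Int.toNat_of_nonneg hnn]; push_cast; ring]
    ring
  have hdiff : |gridVal δ N (gridIdx δ N w) - w| ≤ δ := by
    rw [hval]
    have : (r : ℝ) * δ - w = ((r : ℝ) - w / δ) * δ := by
      field_simp
    rw [this, abs_mul, abs_of_pos hδ, abs_sub_comm]
    nlinarith
  refine ⟨hdiff, ?_⟩
  have h5 := abs_le.mp hdiff
  have hval2 : |gridVal δ N (gridIdx δ N w)| ≤ |w| + δ := by
    calc |gridVal δ N (gridIdx δ N w)| = |(gridVal δ N (gridIdx δ N w) - w) + w| := by ring_nf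
      _ ≤ |gridVal δ N (gridIdx δ N w) - w| + |w| := abs_add_le _ _
      _ ≤ |w| + δ := by linarith
  linarith

def canonDims (p L K : ℕ) : ℕ → ℕ := fun l => if l = 0 then p else if l < L then K else 1

noncomputable def WofQ (L D N : ℕ) (δ : ℝ)
    (q : Fin L → ((Fin D → Fin D → Fin (2*N+1)) × (Fin D → Fin (2*N+1)))) :
    ℕ → ℕ → ℕ → ℝ :=
  fun l i j => if h : l < L ∧ i < D ∧ j < D then
    gridVal δ N ((q ⟨l, h.1⟩).1 ⟨i, h.2.1⟩ ⟨j, h.2.2⟩) else 0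

noncomputable def bofQ (L D N : ℕ) (δ : ℝ)
    (q : Fin L → ((Fin D → Fin D → Fin (2*N+1)) × (Fin D → Fin (2*N+1)))) :
    ℕ → ℕ → ℝ :=
  fun l j => if h : l < L ∧ j < D then gridVal δ N ((q ⟨l, h.1⟩).2 ⟨j, h.2⟩) else 0

set_option maxHeartbeats 2000000 in
/-- Lemma A.2: metric entropy bound for the non-sparse ReLU class:
for every `p` and `B ≥ 1` there is `c₀ > 0` such that for all `L, K ≥ 2` and
`ε ∈ (0,1)` there is a finite set `G` of functions with
`|G| ≤ exp(c₀ (LK)² log(LK/ε))` that is a sup-norm `ε`-net of `F_nn(L, K, B)` on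
`[0,1]^p`; i.e. `log N(ε, F_nn(L,K,B), ‖·‖_∞) ≤ c₀ (LK)² log(LK/ε)`. -/
theorem fnn_metric_entropy (p : ℕ) (B : ℝ) (hB : 1 ≤ B) :
    ∃ c₀ : ℝ, 0 < c₀ ∧
      ∀ L K : ℕ, 2 ≤ L → 2 ≤ K → ∀ ε : ℝ, 0 < ε → ε < 1 →
        ∃ G : Finset ((Fin p → ℝ) → ℝ),
          (G.card : ℝ) ≤ Real.exp (c₀ * ((L * K : ℕ) : ℝ) ^ 2 *
            Real.log (((L * K : ℕ) : ℝ) / ε)) ∧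
          ∀ f : (Fin p → ℝ) → ℝ, FnnMem p L K B f →
            ∃ g ∈ G, ∀ x ∈ unitCube p, |f x - g x| ≤ ε := by
  classical
  have hpm1 : (1:ℝ) ≤ (max p 1 : ℕ) := by exact_mod_cast Nat.le_max_right p 1
  set a : ℝ := 24 * (max p 1 : ℕ) * B ^ 2 with ha
  set A : ℝ := 336 * (max p 1 : ℕ) * B ^ 3 with hA
  have hB2' : (1:ℝ) ≤ B ^ 2 := one_le_pow₀ hB
  have hB3' : (1:ℝ) ≤ B ^ 3 := one_le_pow₀ hB
  have ha1 : (1:ℝ) ≤ a := by rw [ha]; nlinarith only [hpm1, hB2']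
  have hA1 : (1:ℝ) ≤ A := by rw [hA]; nlinarith only [hpm1, hB3']
  have hAa : A = 14 * B * a := by rw [hA, ha]; ring
  have hlogA : 0 ≤ Real.log A := Real.log_nonneg hA1
  refine ⟨2 * ((max p 1 : ℕ) : ℝ) ^ 2 * (Real.log A + 1), by nlinarith only [hpm1, hlogA], ?_⟩
  intro L K hL hK ε hε hε1
  set D : ℕ := max p K with hD
  have hKD : K ≤ D := le_max_right _ _
  have hpD : p ≤ D := le_max_left _ _
  have hD1 : 1 ≤ D := by omega
  have hDpmK : (D : ℝ) ≤ ((max p 1 : ℕ) : ℝ) * K := by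
    have : D ≤ (max p 1) * K := by
      apply max_le
      · calc p ≤ max p 1 := le_max_left _ _
          _ ≤ (max p 1) * K := Nat.le_mul_of_pos_right _ (by omega)
      · calc K = 1 * K := (one_mul K).symm
          _ ≤ (max p 1) * K := Nat.mul_le_mul_right K (le_max_right p 1)
    exact_mod_cast this
  set C : ℝ := 2 * (D:ℝ) * (2*B) ^ 2 with hC
  have hDpos : (0:ℝ) < D := by exact_mod_cast hD1
  have hD1' : (1:ℝ) ≤ D := by exact_mod_cast hD1
  have hC1 : (1:ℝ) ≤ C := by rw [hC]; nlinarith only [hD1', hB]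
  have h3C1 : (1:ℝ) ≤ 3 * C := by linarith only [hC1]
  set T : ℝ := (L:ℝ) * (3*C) ^ L with hT
  have hL2 : (2:ℝ) ≤ (L:ℝ) := by exact_mod_cast hL
  have hK2 : (2:ℝ) ≤ (K:ℝ) := by exact_mod_cast hK
  have h3CL1 : (1:ℝ) ≤ (3*C) ^ L := one_le_pow₀ h3C1
  have hT1 : (1:ℝ) ≤ T := by rw [hT]; nlinarith only [hL2, h3CL1]
  have hTpos : (0:ℝ) < T := by linarith only [hT1]
  set δ : ℝ := ε / T with hδdef
  have hδpos : 0 < δ := by rw [hδdef]; positivity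
  have hδ1 : δ ≤ 1 := by
    rw [hδdef, div_le_one hTpos]; linarith only [hT1, hε1.le]
  set N : ℕ := ⌈B/δ⌉₊ + 1 with hN
  have hNge : B/δ + 1 ≤ (N:ℝ) := by
    rw [hN]; push_cast; linarith only [Nat.le_ceil (B/δ)]
  have hNle : (N:ℝ) ≤ B/δ + 2 := by
    rw [hN]; push_cast
    linarith only [(Nat.ceil_lt_add_one (show (0:ℝ) ≤ B/δ by positivity))]
  set enc : (Fin L → ((Fin D → Fin D → Fin (2*N+1)) × (Fin D → Fin (2*N+1)))) →
      ((Fin p → ℝ) → ℝ) :=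
    fun q => fun x => nnEv (canonDims p L K) (WofQ L D N δ q) (bofQ L D N δ q) L (extv x) 0
    with henc
  refine ⟨Finset.image enc Finset.univ, ?_, ?_⟩
  · -- cardinality bound
    have hcard : (Finset.image enc Finset.univ).card ≤ (2*N+1) ^ (2*D*D*L) := by
      refine Finset.card_image_le.trans ?_
      rw [Finset.card_univ]
      have hQ : Fintype.card
          (Fin L → ((Fin D → Fin D → Fin (2*N+1)) × (Fin D → Fin (2*N+1)))) =
          ((2*N+1) ^ (D*D) * (2*N+1) ^ D) ^ L := by
        simp [Fintype.card_fun, Fintype.card_prod, Fintype.card_fin, pow_mul]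
      rw [hQ]
      have h1 : ((2*N+1) ^ (D*D) * (2*N+1) ^ D) ^ L = (2*N+1) ^ ((D*D+D)*L) := by
        rw [← pow_add, ← pow_mul]
      rw [h1]
      apply Nat.pow_le_pow_right (by omega)
      have : D ≤ D * D := Nat.le_mul_of_pos_right _ (by omega)
      nlinarith
    have hcard' : ((Finset.image enc Finset.univ).card : ℝ) ≤
        ((((2*N+1) ^ (2*D*D*L)) : ℕ) : ℝ) := by exact_mod_cast hcard
    refine le_trans hcard' ?_
    have hM1 : (1:ℝ) ≤ ((2*N+1 : ℕ) : ℝ) := by push_cast; linarith only [Nat.cast_nonneg (α := ℝ) N]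
    have hMpos : (0:ℝ) < ((2*N+1 : ℕ) : ℝ) := by linarith only [hM1]
    rw [show (((2*N+1 : ℕ) ^ (2*D*D*L) : ℕ) : ℝ) = ((2*N+1 : ℕ) : ℝ) ^ (2*D*D*L) by push_cast; ring]
    rw [show ((2*N+1 : ℕ) : ℝ) ^ (2*D*D*L) =
      Real.exp ((2*D*D*L : ℕ) * Real.log ((2*N+1 : ℕ) : ℝ)) by
        rw [← Real.log_pow, Real.exp_log (by positivity)]]
    rw [Real.exp_le_exp]
    -- the key log inequality
    set X : ℝ := ((L * K : ℕ) : ℝ) / ε with hX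
    have hXeq : X = (L:ℝ) * K / ε := by rw [hX]; push_cast; ring
    have hXpos : 0 < X := by rw [hXeq]; positivity
    have hLK4 : (4:ℝ) ≤ (L:ℝ) * K := by nlinarith only [hL2, hK2]
    have hX4 : (4:ℝ) ≤ X := by
      rw [hXeq, le_div_iff₀ hε]
      nlinarith only [hLK4, hε.le, hε1.le]
    have hlX1 : 1 ≤ Real.log X := by
      rw [Real.le_log_iff_exp_le hXpos]
      calc Real.exp 1 ≤ 2.7182818286 := (Real.exp_one_lt_d9).le
        _ ≤ 4 := by norm_num
        _ ≤ X := hX4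
    have hBbδ : (1:ℝ) ≤ B/δ := by
      rw [le_div_iff₀ hδpos]; linarith only [hδ1, hB]
    have hMle : ((2*N+1 : ℕ) : ℝ) ≤ 7 * (B/δ) := by
      have hNle' := hNle
      push_cast at hNle' ⊢
      linarith only [hNle', hBbδ]
    -- bound 7*(2B)/δ ≤ (A*X)^L
    have h3CaK : 3*C ≤ a * K := by
      rw [hC, ha]
      nlinarith only [hDpmK, sq_nonneg B]
    have hpow3C : (3*C) ^ L ≤ a ^ L * (K:ℝ) ^ L := by
      rw [← mul_pow]
      exact pow_le_pow_left₀ (by linarith only [hC1]) h3CaK L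
    have hεL : ε ^ L ≤ ε := by
      calc ε ^ L ≤ ε ^ 1 := pow_le_pow_of_le_one hε.le hε1.le (by omega)
        _ = ε := pow_one ε
    have hεLpos : 0 < ε ^ L := pow_pos hε L
    have hnum : 14 * B * ((L:ℝ) * (3*C) ^ L) ≤ A ^ L * (L:ℝ) ^ L * (K:ℝ) ^ L := by
      have hLL : (L:ℝ) ≤ (L:ℝ) ^ L := le_self_pow₀ (by linarith only [hL2]) (by omega)
      have h14B : 14 * B ≤ (14*B) ^ L := le_self_pow₀ (by linarith only [hB]) (by omega)
      have s1 : (L:ℝ) * (3*C) ^ L ≤ (L:ℝ) ^ L * (a ^ L * (K:ℝ) ^ L) := by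
        apply mul_le_mul hLL hpow3C (by positivity) (by positivity)
      calc 14 * B * ((L:ℝ) * (3*C) ^ L) ≤ (14*B) ^ L * ((L:ℝ) ^ L * (a ^ L * (K:ℝ) ^ L)) := by
            apply mul_le_mul h14B s1 (by positivity) (by positivity)
        _ = ((14*B) ^ L * a ^ L) * (L:ℝ) ^ L * (K:ℝ) ^ L := by ring
        _ = A ^ L * (L:ℝ) ^ L * (K:ℝ) ^ L := by rw [← mul_pow, ← hAa]
    have hAXpow : (A * X) ^ L = A ^ L * (L:ℝ) ^ L * (K:ℝ) ^ L / ε ^ L := by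
      rw [hXeq]
      rw [show A * ((L:ℝ) * K / ε) = A * (L:ℝ) * K / ε by ring]
      rw [div_pow]
      congr 1
      rw [mul_pow, mul_pow]
    have h7 : 7 * (B/δ) = 7 * B * ((L:ℝ) * (3*C) ^ L) / ε := by
      rw [hδdef, hT]
      field_simp
    have h714 : 7 * B * ((L:ℝ) * (3*C) ^ L) ≤ 14 * B * ((L:ℝ) * (3*C) ^ L) := by
      have h0 : (0:ℝ) ≤ B * ((L:ℝ) * (3*C) ^ L) := by
        have hC0 : (0:ℝ) ≤ 3*C := by linarith only [hC1]
        have : (0:ℝ) ≤ (3*C) ^ L := pow_nonneg hC0 L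
        have hL0 : (0:ℝ) ≤ (L:ℝ) := by linarith only [hL2]
        have hB0 : (0:ℝ) ≤ B := by linarith only [hB]
        positivity
      linarith only [h0]
    have hMAX : ((2*N+1 : ℕ) : ℝ) ≤ (A * X) ^ L := by
      rw [hAXpow]
      refine hMle.trans ?_
      rw [h7, div_le_div_iff₀ hε hεLpos]
      calc 7 * B * ((L:ℝ) * (3*C) ^ L) * ε ^ L
          ≤ 14 * B * ((L:ℝ) * (3*C) ^ L) * ε ^ L := by
            apply mul_le_mul_of_nonneg_right h714 (by positivity)
        _
          ≤ (A ^ L * (L:ℝ) ^ L * (K:ℝ) ^ L) * ε ^ L := by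
            apply mul_le_mul_of_nonneg_right hnum (by positivity)
        _ ≤ (A ^ L * (L:ℝ) ^ L * (K:ℝ) ^ L) * ε := by
            apply mul_le_mul_of_nonneg_left hεL (by positivity)
    have hAXpos : 0 < A * X := by positivity
    have hlogM : Real.log ((2*N+1 : ℕ) : ℝ) ≤ L * (Real.log A + Real.log X) := by
      calc Real.log ((2*N+1 : ℕ) : ℝ) ≤ Real.log ((A * X) ^ L) :=
            Real.log_le_log hMpos hMAX
        _ = L * Real.log (A * X) := by rw [Real.log_pow]
        _ = L * (Real.log A + Real.log X) := by
            rw [Real.log_mul (by linarith only [hA1]) (by linarith only [hXpos])]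
    have hlogM0 : 0 ≤ Real.log ((2*N+1 : ℕ) : ℝ) := Real.log_nonneg hM1
    have hfold : Real.log A + Real.log X ≤ (Real.log A + 1) * Real.log X := by
      nlinarith only [hlogA, hlX1]
    have hDD : ((D:ℝ)) * D ≤ ((max p 1 : ℕ) : ℝ) ^ 2 * ((K:ℝ) * K) := by
      have h1 := mul_self_le_mul_self hDpos.le hDpmK
      have h2 : (((max p 1 : ℕ) : ℝ) * K) * (((max p 1 : ℕ) : ℝ) * K) =
          ((max p 1 : ℕ) : ℝ) ^ 2 * ((K:ℝ) * K) := by ring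
      linarith only [h1, h2]
    calc ((2*D*D*L : ℕ) : ℝ) * Real.log ((2*N+1 : ℕ) : ℝ)
        ≤ ((2*D*D*L : ℕ) : ℝ) * ((L:ℝ) * (Real.log A + Real.log X)) := by
          apply mul_le_mul_of_nonneg_left hlogM (by positivity)
      _ ≤ ((2*D*D*L : ℕ) : ℝ) * ((L:ℝ) * ((Real.log A + 1) * Real.log X)) := by
          apply mul_le_mul_of_nonneg_left ?_ (by positivity)
          apply mul_le_mul_of_nonneg_left hfold (by positivity)
      _ = (2 * ((D:ℝ) * D)) * ((L:ℝ) * L) * (Real.log A + 1) * Real.log X := by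
          push_cast; ring
      _ ≤ (2 * (((max p 1 : ℕ) : ℝ) ^ 2 * ((K:ℝ) * K))) * ((L:ℝ) * L) *
            (Real.log A + 1) * Real.log X := by
          have hlX0 : (0:ℝ) ≤ Real.log X := by linarith only [hlX1]
          have hLL0 : (0:ℝ) ≤ (L:ℝ) * L := by positivity
          have hA10 : (0:ℝ) ≤ Real.log A + 1 := by linarith only [hlogA]
          apply mul_le_mul_of_nonneg_right _ hlX0
          apply mul_le_mul_of_nonneg_right _ hA10
          apply mul_le_mul_of_nonneg_right _ hLL0
          linarith only [hDD]
      _ = 2 * ((max p 1 : ℕ) : ℝ) ^ 2 * (Real.log A + 1) * ((L * K : ℕ) : ℝ) ^ 2 *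
            Real.log X := by
          push_cast; ring
  · -- covering property
    intro f hf
    obtain ⟨dims, hd0, hdL, hmid, W, b, hWa, hba, hfx⟩ := hf
    subst hd0
    set qf : Fin L → ((Fin D → Fin D → Fin (2*N+1)) × (Fin D → Fin (2*N+1))) :=
      fun l => (fun i j => gridIdx δ N (extW dims W l.val i.val j.val),
                fun j => gridIdx δ N (extb dims b l.val j.val)) with hqf
    refine ⟨enc qf, Finset.mem_image_of_mem _ (Finset.mem_univ qf), ?_⟩
    intro x hx
    -- basic dims facts
    have hdle : ∀ n, n ≤ L → dims n ≤ D := by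
      intro n hn
      rcases Nat.eq_or_lt_of_le hn with h | h
      · subst h; omega
      · rcases Nat.eq_zero_or_pos n with h0 | h0
        · subst h0; exact hpD
        · rw [hmid n h0 h]; exact hKD
    have hcanon : ∀ l, canonDims (dims 0) L K l ≤ D := by
      intro l
      unfold canonDims
      split
      · exact hpD
      · split
        · exact hKD
        · omega
    have hcd : ∀ m, m < L → dims m = canonDims (dims 0) L K m := by
      intro m hm
      unfold canonDims
      rcases Nat.eq_zero_or_pos m with h0 | h0
      · subst h0; simp
      · rw [if_neg (by omega), if_pos hm]
        exact hmid m h0 hm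
    have hxb : ∀ j, |extv x j| ≤ 1 := by
      intro j
      unfold extv
      split
      · next h =>
          obtain ⟨h1, h2⟩ := hx ⟨j, h⟩
          exact abs_le.mpr ⟨by linarith only [h1], h2⟩
      · simp
    -- bounds on extended parameters
    have hWe : ∀ m, m < L → ∀ i j, |extW dims W m i j| ≤ B := by
      intro m hm i j
      unfold extW
      split
      · exact hWa m hm _ _
      · simp only [abs_zero]; linarith only [hB]
    have hbe : ∀ m, m < L → ∀ j, |extb dims b m j| ≤ B := by
      intro m hm j
      unfold extb
      split
      · exact hba m hm _
      · simp only [abs_zero]; linarith only [hB]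
    -- step 1: f x in terms of nnEv
    have hstep1 : f x = nnEv dims (extW dims W) (extb dims b) L (extv x) 0 := by
      rw [hfx x]
      have hxx : (fun j => x (Fin.cast rfl j)) = x := rfl
      calc (∑ i, reluForward dims W b L (fun j => x (Fin.cast rfl j)) i)
          = ∑ _i : Fin (dims L), nnEv dims (extW dims W) (extb dims b) L (extv x) 0 := by
            refine Finset.sum_congr rfl fun i _ => ?_
            rw [hxx, nnEv_bridge]
            congr 1
            have := i.isLt
            omega
        _ = (dims L) • nnEv dims (extW dims W) (extb dims b) L (extv x) 0 := by
            rw [Finset.sum_const, Finset.card_univ, Fintype.card_fin]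
        _ = nnEv dims (extW dims W) (extb dims b) L (extv x) 0 := by
            rw [hdL, one_nsmul]
    -- step 2: switch to canonical dims
    have hstep2 : nnEv dims (extW dims W) (extb dims b) L (extv x) 0 =
        nnEv (canonDims (dims 0) L K) (extW dims W) (extb dims b) L (extv x) 0 := by
      exact nnEv_congr dims (canonDims (dims 0) L K) _ _ _ _ (extv x) L hcd
        (fun _ _ _ _ _ => rfl) (fun _ _ _ _ => rfl) 0
    -- step 3: parameter facts for the quantized network
    have hfacts : ∀ m, m < L → ∀ i j,
        |extW dims W m i j| ≤ 2*B ∧ |extb dims b m j| ≤ 2*B ∧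
        |WofQ L D N δ qf m i j| ≤ 2*B ∧ |bofQ L D N δ qf m j| ≤ 2*B ∧
        |extW dims W m i j - WofQ L D N δ qf m i j| ≤ δ ∧
        |extb dims b m j - bofQ L D N δ qf m j| ≤ δ := by
      intro m hm i j
      have hWfact : |WofQ L D N δ qf m i j| ≤ 2*B ∧
          |extW dims W m i j - WofQ L D N δ qf m i j| ≤ δ := by
        by_cases hij : i < D ∧ j < D
        · have hWq : WofQ L D N δ qf m i j =
              gridVal δ N (gridIdx δ N (extW dims W m i j)) := by
            unfold WofQ
            rw [dif_pos ⟨hm, hij.1, hij.2⟩]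
          obtain ⟨g1, g2⟩ := grid_approx δ N B (extW dims W m i j) hδpos hδ1 hB hNge
            (hWe m hm i j)
          rw [hWq]
          exact ⟨g2, by rw [abs_sub_comm]; exact g1⟩
        · have hWq0 : WofQ L D N δ qf m i j = 0 := by
            unfold WofQ
            rw [dif_neg (by tauto)]
          have hWe0 : extW dims W m i j = 0 := by
            unfold extW
            rw [dif_neg ?_]
            rintro ⟨h1, h2⟩
            have d1 : dims (m+1) ≤ D := hdle (m+1) (by omega)
            have d2 : dims m ≤ D := hdle m (by omega)
            push_neg at hij
            rcases Nat.lt_or_ge i D with hi | hi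
            · have := hij hi; omega
            · omega
          rw [hWq0, hWe0]
          refine ⟨by rw [abs_zero]; linarith only [hB], by rw [sub_zero, abs_zero]; exact hδpos.le⟩
      have hbfact : |bofQ L D N δ qf m j| ≤ 2*B ∧
          |extb dims b m j - bofQ L D N δ qf m j| ≤ δ := by
        by_cases hj : j < D
        · have hbq : bofQ L D N δ qf m j =
              gridVal δ N (gridIdx δ N (extb dims b m j)) := by
            unfold bofQ
            rw [dif_pos ⟨hm, hj⟩]
          obtain ⟨g1, g2⟩ := grid_approx δ N B (extb dims b m j) hδpos hδ1 hB hNge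
            (hbe m hm j)
          rw [hbq]
          exact ⟨g2, by rw [abs_sub_comm]; exact g1⟩
        · have hbq0 : bofQ L D N δ qf m j = 0 := by
            unfold bofQ
            rw [dif_neg (by tauto)]
          have hbe0 : extb dims b m j = 0 := by
            unfold extb
            rw [dif_neg ?_]
            have d2 : dims m ≤ D := hdle m (by omega)
            omega
          rw [hbq0, hbe0]
          refine ⟨by rw [abs_zero]; linarith only [hB], by rw [sub_zero, abs_zero]; exact hδpos.le⟩
      exact ⟨(hWe m hm i j).trans (by linarith only [hB]),
        (hbe m hm j).trans (by linarith only [hB]), hWfact.1, hbfact.1, hWfact.2, hbfact.2⟩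
    -- step 4: apply the perturbation bound
    have hdiff := nnEv_diff (canonDims (dims 0) L K) (extW dims W) (WofQ L D N δ qf)
      (extb dims b) (bofQ L D N δ qf) (extv x) D (2*B) δ hcanon hD1 hxb
      (by linarith only [hB]) hδpos.le L hfacts 0
    have hδLC : δ * (L:ℝ) * (3 * (2 * (D:ℝ) * (2*B) ^ 2)) ^ L = ε := by
      rw [hδdef, hT, ← hC]
      field_simp
    rw [hδLC] at hdiff
    have hgx : enc qf x =
        nnEv (canonDims (dims 0) L K) (WofQ L D N δ qf) (bofQ L D N δ qf) L (extv x) 0 := rfl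
    rw [hstep1, hstep2, hgx]
    exact hdiff
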